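/- Let c : {1,2,3,…} → ℚ and let M_i denote the unique ℚ-linear operator on ℚ[x₁,x₂,…] with M_i S_π = S_{r_i π} if ℓ(r_i π) < ℓ(π) and M_i S_π = 0 otherwise (defined via the Schubert basis; the sum D = Σ_{i ≥ 1} c_i M_i is well-defined on each polynomial since each π ∈ S_∞ has finitely many left descents). If D is a derivation of the ring ℚ[x₁,x₂,…] (i.e. D(fg) = D(f)g + fD(g) for all f, g), then c_i = i · c₁ for all i ≥ 1; that is, D is a scalar multiple of ∇ = Σ_i ∂/∂x_i. -/

import Mathlib

open MvPolynomial

/-- The simple transposition `r_i = (i, i+1)` of `{1, 2, 3, …}`. -/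
def simpleTransposition (i : ℕ+) : Equiv.Perm ℕ+ := Equiv.swap i (i + 1)

/-- A permutation of `{1, 2, 3, …}` moves only finitely many points. -/
def FinitelySupported (π : Equiv.Perm ℕ+) : Prop := {i : ℕ+ | π i ≠ i}.Finite

/-- The Coxeter length of a finitely supported permutation of `{1, 2, 3, …}`:
the least length of a word in the simple transpositions expressing it. -/
noncomputable def len (π : Equiv.Perm ℕ+) : ℕ :=
  sInf {k : ℕ | ∃ l : List ℕ+, l.length = k ∧ π = (l.map simpleTransposition).prod}

/-- The set of reduced words for `π`. -/
def RW (π : Equiv.Perm ℕ+) : Set (List ℕ+) :=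
  {l : List ℕ+ | l.length = len π ∧ π = (l.map simpleTransposition).prod}

/-- `i ↦ n + 1 - i` on `{1, …, n}`, identity elsewhere. -/
def w0fun (n : ℕ) : ℕ+ → ℕ+ :=
  fun i => if h : (i : ℕ) ≤ n then (⟨n + 1 - (i : ℕ), by omega⟩ : ℕ+) else i

theorem w0fun_involutive (n : ℕ) : Function.Involutive (w0fun n) := by
  intro i
  have hi : 1 ≤ (i : ℕ) := i.2
  apply PNat.coe_injective
  by_cases h1 : (i : ℕ) ≤ n
  · have h2 : n + 1 - (i : ℕ) ≤ n := by omega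
    simp [w0fun, h1, h2] <;> omega
  · simp [w0fun, h1]

/-- The longest element `w₀` of `S_n ⊆ S_∞`, i.e. `i ↦ n + 1 - i` on `{1, …, n}`. -/
def w0 (n : ℕ) : Equiv.Perm ℕ+ := Function.Involutive.toPerm (w0fun n) (w0fun_involutive n)

/-- The property defining Schubert polynomials: `S_{w₀} = x₁^{n-1} x₂^{n-2} ⋯ x_{n-1}`
for the longest element `w₀` of each `S_n`, together with
`∂_i S_π = S_{π rᵢ}` whenever `ℓ(π rᵢ) = ℓ(π) − 1`, the latter encoded
denominator-free as `(xᵢ − xᵢ₊₁) · S_{π rᵢ} = S_π − sᵢ(S_π)`. -/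
def IsSchubertFamily {R : Type*} [CommRing R] (SP : Equiv.Perm ℕ+ → MvPolynomial ℕ+ R) : Prop :=
  (∀ n : ℕ, SP (w0 n)
      = ∏ i ∈ Finset.range n, (X (⟨i + 1, Nat.succ_pos i⟩ : ℕ+) : MvPolynomial ℕ+ R) ^ (n - 1 - i))
  ∧ (∀ π : Equiv.Perm ℕ+, FinitelySupported π → ∀ i : ℕ+,
      len (π * simpleTransposition i) + 1 = len π →
      (X i - X (i + 1)) * SP (π * simpleTransposition i)
        = SP π - rename (Equiv.swap i (i + 1)) (SP π))

namespace SchubAux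

open Equiv

/-- `pn n` : the positive natural corresponding to `n` (junk `1` for `n = 0`). -/
def pn (n : ℕ) : ℕ+ := n.toPNat'

lemma pn_coe {n : ℕ} (h : 1 ≤ n) : ((pn n : ℕ+) : ℕ) = n := by
  simp [pn, Nat.toPNat'_coe, Nat.lt_of_lt_of_le Nat.zero_lt_one h]

lemma pn_one : pn 1 = 1 := rfl

lemma pn_succ {n : ℕ} (h : 1 ≤ n) : pn (n+1) = pn n + 1 := by
  apply PNat.coe_injective
  rw [PNat.add_coe, pn_coe (by omega), pn_coe h, PNat.one_coe]

abbrev st (k : ℕ+) : Equiv.Perm ℕ+ := simpleTransposition k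

lemma st_apply (k x : ℕ+) : st k x = if x = k then k+1 else if x = k+1 then k else x := by
  simp [st, simpleTransposition, Equiv.swap_apply_def]

lemma stn (k x : ℕ+) :
    ((st k x : ℕ+) : ℕ) = if (x:ℕ) = (k:ℕ) then (k:ℕ)+1 else if (x:ℕ) = (k:ℕ)+1 then (k:ℕ) else (x:ℕ) := by
  rw [st_apply]
  rcases eq_or_ne x k with h | h
  · simp [h]
  · rw [if_neg h, if_neg (fun hc => h (PNat.coe_injective hc))]
    rcases eq_or_ne x (k+1) with h2 | h2
    · simp [h2]
    · rw [if_neg h2, if_neg (fun hc => h2 (PNat.coe_injective (by rw [hc, PNat.add_coe, PNat.one_coe])))]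

lemma st_move_le (k x : ℕ+) : ((st k x : ℕ+) : ℕ) ≤ (x:ℕ) + 1 ∧ (x:ℕ) ≤ ((st k x : ℕ+) : ℕ) + 1 := by
  rw [stn]; split_ifs <;> omega

/-- product of a word of simple transpositions -/
def wprod (l : List ℕ+) : Equiv.Perm ℕ+ := (l.map simpleTransposition).prod

lemma wprod_nil : wprod [] = 1 := rfl

lemma wprod_cons (a : ℕ+) (l : List ℕ+) : wprod (a :: l) = st a * wprod l := by
  simp [wprod]

lemma wprod_append (l₁ l₂ : List ℕ+) : wprod (l₁ ++ l₂) = wprod l₁ * wprod l₂ := by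
  simp [wprod]

lemma wprod_concat (l : List ℕ+) (a : ℕ+) : wprod (l ++ [a]) = wprod l * st a := by
  simp [wprod]

lemma len_le_of_word {σ : Equiv.Perm ℕ+} {l : List ℕ+} (h : σ = wprod l) :
    len σ ≤ l.length :=
  Nat.sInf_le ⟨l, rfl, h⟩

def HasWord (σ : Equiv.Perm ℕ+) : Prop := ∃ l : List ℕ+, σ = wprod l

lemma exists_min_word {σ : Equiv.Perm ℕ+} (h : HasWord σ) :
    ∃ l : List ℕ+, l.length = len σ ∧ σ = wprod l := by
  obtain ⟨l, hl⟩ := h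
  have : (Set.Nonempty {k : ℕ | ∃ l : List ℕ+, l.length = k ∧ σ = (l.map simpleTransposition).prod}) :=
    ⟨l.length, l, rfl, hl⟩
  exact Nat.sInf_mem this

lemma len_one : len (1 : Equiv.Perm ℕ+) = 0 :=
  Nat.le_zero.mp (len_le_of_word (l := []) rfl)

lemma eq_one_of_len_eq_zero {σ : Equiv.Perm ℕ+} (h : HasWord σ) (h0 : len σ = 0) : σ = 1 := by
  obtain ⟨l, hl, he⟩ := exists_min_word h
  rw [h0] at hl
  rw [List.length_eq_zero_iff] at hl
  rw [he, hl, wprod_nil]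

lemma eq_st_of_len_eq_one {σ : Equiv.Perm ℕ+} (h : HasWord σ) (h1 : len σ = 1) :
    ∃ k, σ = st k := by
  obtain ⟨l, hl, he⟩ := exists_min_word h
  rw [h1] at hl
  rw [List.length_eq_one_iff] at hl
  obtain ⟨a, ha⟩ := hl
  exact ⟨a, by rw [he, ha]; simp [wprod]⟩

/-! ### Finite support -/

lemma fs_one : FinitelySupported 1 := by
  have : {i : ℕ+ | (1 : Equiv.Perm ℕ+) i ≠ i} = ∅ := by ext i; simp
  unfold FinitelySupported
  rw [this]
  exact Set.finite_empty

lemma fs_mul {σ τ : Equiv.Perm ℕ+} (hσ : FinitelySupported σ) (hτ : FinitelySupported τ) :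
    FinitelySupported (σ * τ) := by
  apply Set.Finite.subset (hσ.union hτ)
  intro i hi
  by_contra hc
  simp only [Set.mem_union, Set.mem_setOf_eq, not_or, not_not] at hc
  apply hi
  simp only [Set.mem_setOf_eq, not_not, Equiv.Perm.mul_apply, hc.2, hc.1]

lemma fs_st (k : ℕ+) : FinitelySupported (st k) := by
  apply Set.Finite.subset ((Set.finite_singleton (k+1)).insert k)
  intro i hi
  simp only [Set.mem_setOf_eq] at hi
  simp only [Set.mem_insert_iff, Set.mem_singleton_iff]
  by_contra hc
  push_neg at hc
  rw [st_apply, if_neg hc.1, if_neg hc.2] at hi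
  exact hi rfl

lemma fs_wprod (l : List ℕ+) : FinitelySupported (wprod l) := by
  induction l with
  | nil => exact fs_one
  | cons a l ih => rw [wprod_cons]; exact fs_mul (fs_st a) ih

lemma fs_of_hasword {σ : Equiv.Perm ℕ+} (h : HasWord σ) : FinitelySupported σ := by
  obtain ⟨l, rfl⟩ := h; exact fs_wprod l

end SchubAux

namespace SchubAux

/-! ### Inversions -/

def Invset (π : Equiv.Perm ℕ+) : Set (ℕ+ × ℕ+) := {p | p.1 < p.2 ∧ π p.2 < π p.1}

noncomputable def inv (π : Equiv.Perm ℕ+) : ℕ := (Invset π).ncard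

lemma mem_supp_apply {π : Equiv.Perm ℕ+} {x : ℕ+} (h : π x ≠ x) : π (π x) ≠ π x :=
  fun hc => h (π.injective hc)

lemma invset_finite {π : Equiv.Perm ℕ+} (h : FinitelySupported π) : (Invset π).Finite := by
  obtain ⟨N, hN⟩ : ∃ N : ℕ, ∀ s : ℕ+, π s ≠ s → (s:ℕ) ≤ N := by
    obtain ⟨N, hN⟩ := (h.image (fun s : ℕ+ => (s:ℕ))).bddAbove
    exact ⟨N, fun s hs => hN ⟨s, hs, rfl⟩⟩
  have hsub : Invset π ⊆ {p : ℕ+ × ℕ+ | (p.1:ℕ) ≤ N ∧ (p.2:ℕ) ≤ N} := by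
    rintro ⟨a, b⟩ ⟨hab, hba⟩
    simp only [Set.mem_setOf_eq]
    by_cases hb : π b = b
    · -- then π a > b > a so a moved, and π a moved, π a ≤ N, b < π a
      have ha : π a ≠ a := by
        intro hc
        rw [hb, hc] at hba
        exact absurd hba (not_lt_of_gt hab)
      have h1 : (a:ℕ) ≤ N := hN a ha
      have h2 : (π a : ℕ) ≤ N := hN (π a) (mem_supp_apply ha)
      have h3 : (b:ℕ) < (π a : ℕ) := by
        have : b < π a := lt_of_eq_of_lt hb.symm hba
        exact_mod_cast this
      constructor <;> omega
    · have h2 : (b:ℕ) ≤ N := hN b hb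
      have h1 : (a:ℕ) < (b:ℕ) := by exact_mod_cast hab
      constructor <;> omega
  apply Set.Finite.subset _ hsub
  have : Set.Finite ((fun p : ℕ+ × ℕ+ => ((p.1:ℕ), (p.2:ℕ))) '' {p : ℕ+ × ℕ+ | (p.1:ℕ) ≤ N ∧ (p.2:ℕ) ≤ N}) := by
    apply Set.Finite.subset (Set.finite_Icc (0,0) (N,N))
    rintro ⟨x, y⟩ ⟨⟨a, b⟩, ⟨h1, h2⟩, he⟩
    simp only [Prod.mk.injEq] at he
    simp only [Set.mem_Icc, Prod.mk_le_mk]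
    exact ⟨⟨Nat.zero_le _, Nat.zero_le _⟩, ⟨he.1 ▸ h1, he.2 ▸ h2⟩⟩
  apply Set.Finite.of_finite_image this
  intro p _ q _ he
  simp only [Prod.mk.injEq] at he
  exact Prod.ext (PNat.coe_injective he.1) (PNat.coe_injective he.2)

lemma invset_one : Invset 1 = ∅ := by
  ext ⟨a, b⟩
  simp only [Invset, Set.mem_setOf_eq, Set.mem_empty_iff_false, iff_false, not_and]
  intro h
  simp only [Equiv.Perm.one_apply]
  exact not_lt_of_gt h

lemma inv_one : inv 1 = 0 := by simp [inv, invset_one]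

/-- key step: right multiplication by a simple transposition changes `inv` by at most 1. -/
lemma inv_mul_st_le {π : Equiv.Perm ℕ+} (h : FinitelySupported π) (k : ℕ+) :
    inv (π * st k) ≤ inv π + 1 := by
  classical
  set f : ℕ+ × ℕ+ → ℕ+ × ℕ+ := fun p => if st k p.1 < st k p.2 then (st k p.1, st k p.2) else (st k p.2, st k p.1) with hf
  have hfin : (Invset (π * st k)).Finite := invset_finite (fs_mul h (fs_st k))
  have key : ∀ p ∈ Invset (π * st k) \ {(k, k+1)}, st k p.1 < st k p.2 := by
    rintro ⟨a, b⟩ ⟨⟨hab, hba⟩, hne⟩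
    have hab' : (a:ℕ) < (b:ℕ) := by exact_mod_cast hab
    have hne' : ¬((a:ℕ) = (k:ℕ) ∧ (b:ℕ) = (k:ℕ)+1) := by
      intro ⟨h1, h2⟩
      apply hne
      simp only [Set.mem_singleton_iff, Prod.mk.injEq]
      constructor
      · exact PNat.coe_injective h1
      · apply PNat.coe_injective; rw [h2, PNat.add_coe, PNat.one_coe]
    have : ((st k a : ℕ+):ℕ) < ((st k b : ℕ+):ℕ) := by
      rw [stn, stn]
      split_ifs <;> omega
    exact_mod_cast this
  have hmaps : ∀ p ∈ Invset (π * st k) \ {(k, k+1)}, f p ∈ Invset π := by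
    rintro ⟨a, b⟩ hp
    have hlt := key _ hp
    obtain ⟨⟨hab, hba⟩, -⟩ := hp
    simp only [hf, if_pos hlt]
    refine ⟨hlt, ?_⟩
    simpa using hba
  have hinj : Set.InjOn f (Invset (π * st k) \ {(k, k+1)}) := by
    rintro p hp q hq he
    have hlp := key _ hp
    have hlq := key _ hq
    simp only [hf, if_pos hlp, if_pos hlq, Prod.mk.injEq] at he
    have h1 := (st k).injective he.1
    have h2 := (st k).injective he.2
    exact Prod.ext h1 h2
  have step1 : (Invset (π * st k) \ {(k, k+1)}).ncard ≤ inv π :=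
    Set.ncard_le_ncard_of_injOn f hmaps hinj (invset_finite h)
  have step2 : inv (π * st k) ≤ (Invset (π * st k) \ {(k, k+1)}).ncard + 1 := by
    have hsub : Invset (π * st k) ⊆ insert (k, k+1) (Invset (π * st k) \ {(k, k+1)}) := by
      intro p hp
      by_cases hc : p = (k, k+1)
      · exact hc ▸ Set.mem_insert _ _
      · exact Set.mem_insert_of_mem _ ⟨hp, hc⟩
    calc inv (π * st k) ≤ (insert (k, k+1) (Invset (π * st k) \ {(k, k+1)})).ncard :=
          Set.ncard_le_ncard hsub ((hfin.diff).insert _)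
      _ ≤ _ := Set.ncard_insert_le _ _
  omega

lemma inv_wprod_le (l : List ℕ+) : inv (wprod l) ≤ l.length := by
  induction l using List.reverseRecOn with
  | nil => rw [wprod_nil, inv_one]; exact Nat.zero_le _
  | append_singleton l a ih =>
    rw [wprod_concat]
    calc inv (wprod l * st a) ≤ inv (wprod l) + 1 := inv_mul_st_le (fs_wprod l) a
      _ ≤ l.length + 1 := by omega
      _ = (l ++ [a]).length := by simp

lemma inv_le_len {σ : Equiv.Perm ℕ+} (h : HasWord σ) : inv σ ≤ len σ := by
  obtain ⟨l, hl, he⟩ := exists_min_word h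
  rw [← hl, he]
  exact inv_wprod_le l

end SchubAux

namespace SchubAux

/-! ### Inversions of w0 -/

lemma w0_coe (n : ℕ) (x : ℕ+) :
    ((w0 n x : ℕ+) : ℕ) = if (x:ℕ) ≤ n then n + 1 - (x:ℕ) else (x:ℕ) := by
  show ((w0fun n x : ℕ+) : ℕ) = _
  unfold w0fun
  split_ifs with h
  · simp [h]
  · simp [h]

lemma invset_w0 (n : ℕ) :
    Invset (w0 n) = {p : ℕ+ × ℕ+ | p.1 < p.2 ∧ (p.2:ℕ) ≤ n} := by
  ext ⟨a, b⟩
  simp only [Invset, Set.mem_setOf_eq]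
  constructor
  · rintro ⟨hab, hba⟩
    refine ⟨hab, ?_⟩
    by_contra hc
    push_neg at hc
    have hab' : (a:ℕ) < (b:ℕ) := by exact_mod_cast hab
    have hba' : ((w0 n b : ℕ+):ℕ) < ((w0 n a : ℕ+):ℕ) := by exact_mod_cast hba
    rw [w0_coe, w0_coe] at hba'
    have ha1 : 1 ≤ (a:ℕ) := a.2
    split_ifs at hba' <;> omega
  · rintro ⟨hab, hb⟩
    refine ⟨hab, ?_⟩
    have hab' : (a:ℕ) < (b:ℕ) := by exact_mod_cast hab
    have ha1 : 1 ≤ (a:ℕ) := a.2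
    have : ((w0 n b : ℕ+):ℕ) < ((w0 n a : ℕ+):ℕ) := by
      rw [w0_coe, w0_coe]
      split_ifs <;> omega
    exact_mod_cast this

lemma inv_w0 (n : ℕ) : inv (w0 n) = ∑ j ∈ Finset.range n, j := by
  classical
  have himg : Invset (w0 n) =
      ↑((((Finset.range n) ×ˢ (Finset.range n)).filter (fun q => q.1 < q.2)).image
        (fun q : ℕ × ℕ => ((pn (q.1+1), pn (q.2+1)) : ℕ+ × ℕ+))) := by
    rw [invset_w0]
    ext ⟨a, b⟩
    simp only [Set.mem_setOf_eq, Finset.coe_image, Set.mem_image, Finset.mem_coe,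
      Finset.mem_filter, Finset.mem_product, Finset.mem_range, Prod.mk.injEq]
    constructor
    · rintro ⟨hab, hb⟩
      have hab' : (a:ℕ) < (b:ℕ) := by exact_mod_cast hab
      have ha1 : 1 ≤ (a:ℕ) := a.2
      have hb1 : 1 ≤ (b:ℕ) := b.2
      refine ⟨((a:ℕ)-1, (b:ℕ)-1), ⟨⟨by omega, by omega⟩, by omega⟩, ?_, ?_⟩
      · apply PNat.coe_injective; rw [pn_coe (by omega)]; omega
      · apply PNat.coe_injective; rw [pn_coe (by omega)]; omega
    · rintro ⟨⟨i, j⟩, ⟨⟨hi, hj⟩, hij⟩, he1, he2⟩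
      subst he1; subst he2
      constructor
      · have : (pn (i+1) : ℕ) < (pn (j+1) : ℕ) := by
          rw [pn_coe (by omega), pn_coe (by omega)]; omega
        exact_mod_cast this
      · rw [pn_coe (by omega)]; omega
  rw [inv, himg, Set.ncard_coe_finset]
  rw [Finset.card_image_of_injOn]
  · -- card of the filtered set = sum
    have : ((Finset.range n) ×ˢ (Finset.range n)).filter (fun q => q.1 < q.2)
        = (Finset.range n).biUnion (fun j => (Finset.range j).image (fun i => (i, j))) := by
      ext ⟨i, j⟩
      simp only [Finset.mem_filter, Finset.mem_product, Finset.mem_range, Finset.mem_biUnion,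
        Finset.mem_image, Prod.mk.injEq]
      constructor
      · rintro ⟨⟨hi, hj⟩, hij⟩
        exact ⟨j, hj, i, hij, rfl, rfl⟩
      · rintro ⟨j', hj', i', hi', rfl, rfl⟩
        exact ⟨⟨by omega, hj'⟩, hi'⟩
    rw [this, Finset.card_biUnion]
    · apply Finset.sum_congr rfl
      intro j _
      rw [Finset.card_image_of_injOn, Finset.card_range]
      intro x _ y _ h
      simpa using h
    · intro x _ y _ hxy
      simp only [Finset.disjoint_left]
      rintro ⟨i, j⟩ hi hj
      simp only [Finset.mem_image, Finset.mem_range, Prod.mk.injEq] at hi hj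
      obtain ⟨i1, _, _, rfl⟩ := hi
      obtain ⟨i2, _, _, h2⟩ := hj
      exact hxy (h2.symm ▸ rfl)
  · rintro ⟨i, j⟩ hij ⟨i', j'⟩ hij' he
    simp only [Prod.mk.injEq] at he ⊢
    constructor
    · have : ((pn (i+1) : ℕ+) : ℕ) = ((pn (i'+1) : ℕ+) : ℕ) := by rw [he.1]
      rw [pn_coe (by omega), pn_coe (by omega)] at this
      omega
    · have : ((pn (j+1) : ℕ+) : ℕ) = ((pn (j'+1) : ℕ+) : ℕ) := by rw [he.2]
      rw [pn_coe (by omega), pn_coe (by omega)] at this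
      omega

end SchubAux

namespace SchubAux

/-! ### Specific words: decreasing runs and the staircase word -/

/-- the word `s_c s_{c-1} ⋯ s_a` (empty if `c < a`). -/
def gw (a c : ℕ) : List ℕ+ := (List.range (c+1-a)).map (fun u => pn (c - u))

lemma gw_length (a c : ℕ) : (gw a c).length = c + 1 - a := by simp [gw]

lemma gw_nil {a c : ℕ} (h : c < a) : gw a c = [] := by
  unfold gw
  rw [Nat.sub_eq_zero_of_le (by omega)]
  rfl

lemma gw_concat {a c : ℕ} (h : a ≤ c) : gw a c = gw (a+1) c ++ [pn a] := by
  unfold gw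
  have h1 : c + 1 - a = (c - a) + 1 := by omega
  rw [h1, List.range_succ, List.map_append]
  have h2 : c - a = c + 1 - (a+1) := by omega
  have h3 : c - (c - a) = a := by omega
  rw [h2]
  congr 1
  simp only [List.map_cons, List.map_nil, ← h2, h3]

/-- evaluation of the permutation `s_c ⋯ s_a` : it is the cycle `a ↦ c+1`, `x ↦ x - 1`
for `a < x ≤ c+1`. -/
lemma gw_eval : ∀ (n a c : ℕ), c + 1 - a = n → 1 ≤ a → ∀ x : ℕ+,
    ((wprod (gw a c) x : ℕ+) : ℕ) =
      if a ≤ c ∧ (x:ℕ) = a then c+1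
      else if a < (x:ℕ) ∧ (x:ℕ) ≤ c+1 then (x:ℕ) - 1 else (x:ℕ) := by
  intro n
  induction n with
  | zero =>
    intro a c hn ha x
    rw [gw_nil (by omega), wprod_nil]
    simp only [Equiv.Perm.one_apply]
    have h1 : 1 ≤ (x:ℕ) := x.2
    split_ifs <;> omega
  | succ n ih =>
    intro a c hn ha x
    rw [gw_concat (by omega), wprod_append]
    have hsingle : wprod [pn a] = st (pn a) := by simp [wprod]
    rw [hsingle]
    simp only [Equiv.Perm.mul_apply]
    have hya := stn (pn a) x
    rw [pn_coe ha] at hya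
    have hy := ih (a+1) c (by omega) (by omega) (st (pn a) x)
    rw [hy, hya]
    have h1 : 1 ≤ (x:ℕ) := x.2
    split_ifs <;> omega

/-- `Bw M r` : concatenation of the blocks `gw 1 M, gw 2 M, …, gw r M`. -/
def Bw (M : ℕ) : ℕ → List ℕ+
  | 0 => []
  | r+1 => Bw M r ++ gw (r+1) M

lemma Bw_length (M r : ℕ) (h : r ≤ M + 1) :
    (Bw M r).length = ∑ t ∈ Finset.range r, (M - t) := by
  induction r with
  | zero => rfl
  | succ r ih =>
    show (Bw M r ++ gw (r+1) M).length = _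
    rw [List.length_append, ih (by omega), gw_length, Finset.sum_range_succ]
    omega

/-- the interval-reversing involution on `[a, b]`. -/
def swpfun (a b : ℕ) : ℕ+ → ℕ+ := fun i =>
  if h : 1 ≤ a ∧ a ≤ (i:ℕ) ∧ (i:ℕ) ≤ b then ⟨a + b - i, by omega⟩ else i

lemma swpfun_involutive (a b : ℕ) : Function.Involutive (swpfun a b) := by
  intro i
  unfold swpfun
  by_cases h : 1 ≤ a ∧ a ≤ (i:ℕ) ∧ (i:ℕ) ≤ b
  · show swpfun a b (swpfun a b i) = i
    have e : swpfun a b i = ⟨a + b - i, by omega⟩ := dif_pos h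
    rw [e]
    have hc : 1 ≤ a ∧ a ≤ a + b - (i:ℕ) ∧ a + b - (i:ℕ) ≤ b := ⟨h.1, by omega, by omega⟩
    refine (dif_pos hc).trans ?_
    apply PNat.coe_injective
    show a + b - (a + b - (i:ℕ)) = (i:ℕ)
    omega
  · show swpfun a b (swpfun a b i) = i
    have e : swpfun a b i = i := dif_neg h
    rw [e]
    exact e

def swp (a b : ℕ) : Equiv.Perm ℕ+ :=
  Function.Involutive.toPerm (swpfun a b) (swpfun_involutive a b)

lemma swp_coe (a b : ℕ) (x : ℕ+) :
    ((swp a b x : ℕ+) : ℕ) = if 1 ≤ a ∧ a ≤ (x:ℕ) ∧ (x:ℕ) ≤ b then a + b - (x:ℕ) else (x:ℕ) := by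
  show ((swpfun a b x : ℕ+) : ℕ) = _
  unfold swpfun
  split_ifs with h
  · simp [h]
  · simp [h]

lemma swp_eq_w0 (n : ℕ) : swp 1 n = w0 n := by
  apply Equiv.ext
  intro x
  apply PNat.coe_injective
  rw [swp_coe, w0_coe]
  have h1 : 1 ≤ (x:ℕ) := x.2
  split_ifs <;> omega

lemma swp_id {a b : ℕ} (h : b ≤ a) : swp a b = 1 := by
  apply Equiv.ext
  intro x
  apply PNat.coe_injective
  rw [swp_coe]
  simp only [Equiv.Perm.one_apply]
  split_ifs with hc
  · omega
  · rfl

lemma swp_step {a b : ℕ} (h1 : 1 ≤ a) (h2 : a ≤ b) :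
    swp a b = wprod (gw a (b-1)) * swp (a+1) b := by
  apply Equiv.ext
  intro x
  apply PNat.coe_injective
  simp only [Equiv.Perm.mul_apply]
  rw [swp_coe]
  have hg := gw_eval (b - a) a (b-1) (by omega) h1 (swp (a+1) b x)
  rw [hg]
  have hs := swp_coe (a+1) b x
  have h1x : 1 ≤ (x:ℕ) := x.2
  rw [hs]
  split_ifs <;> omega

/-- the full staircase word equals `w0 (M+1)`. -/
lemma Bw_w0 (M : ℕ) : ∀ r, r ≤ M + 1 → swp 1 (M+1) = wprod (Bw M r) * swp (r+1) (M+1) := by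
  intro r
  induction r with
  | zero =>
    intro _
    show swp 1 (M+1) = wprod [] * swp 1 (M+1)
    rw [wprod_nil, one_mul]
  | succ r ih =>
    intro hr
    have hstep : swp (r+1) (M+1) = wprod (gw (r+1) M) * swp (r+2) (M+1) := by
      have := swp_step (a := r+1) (b := M+1) (by omega) (by omega)
      simpa using this
    rw [ih (by omega), hstep, ← mul_assoc, ← wprod_append]
    rfl

lemma w0_eq_wprod_Bw (M : ℕ) : w0 (M+1) = wprod (Bw M (M+1)) := by
  have := Bw_w0 M (M+1) le_rfl
  rw [swp_id (a := M+1+1) (b := M+1) (by omega), mul_one] at this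
  rw [← swp_eq_w0, this]

lemma Bw_last (M : ℕ) : Bw M (M+1) = Bw M M := by
  show Bw M M ++ gw (M+1) M = Bw M M
  rw [gw_nil (by omega), List.append_nil]

/-! ### lengths of the chain prefixes -/

lemma len_full (M : ℕ) : len (wprod (Bw M M)) = (Bw M M).length := by
  have hub : len (wprod (Bw M M)) ≤ (Bw M M).length := len_le_of_word rfl
  have hw0 : wprod (Bw M M) = w0 (M+1) := by rw [w0_eq_wprod_Bw, Bw_last]
  have hlb : inv (wprod (Bw M M)) ≤ len (wprod (Bw M M)) := inv_le_len ⟨_, rfl⟩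
  have hinv : inv (wprod (Bw M M)) = ∑ j ∈ Finset.range (M+1), j := by
    rw [hw0, inv_w0]
  have hlen : (Bw M M).length = ∑ j ∈ Finset.range (M+1), j := by
    rw [Bw_length M M (by omega)]
    have h1 : ∑ t ∈ Finset.range (M+1), (M - t) = ∑ j ∈ Finset.range (M+1), j := by
      have h2 := Finset.sum_range_reflect (fun j => j) (M+1)
      simp only [Nat.add_sub_cancel] at h2
      exact h2
    rw [← h1, Finset.sum_range_succ, Nat.sub_self, add_zero]
  omega

lemma len_mul_wprod_le (σ : Equiv.Perm ℕ+) (hσ : HasWord σ) (l : List ℕ+) :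
    len (σ * wprod l) ≤ len σ + l.length := by
  obtain ⟨m, hm, he⟩ := exists_min_word hσ
  have : σ * wprod l = wprod (m ++ l) := by rw [wprod_append, he]
  calc len (σ * wprod l) ≤ (m ++ l).length := len_le_of_word this
    _ = len σ + l.length := by rw [List.length_append, hm]

lemma reduced_prefix {l₁ l₂ : List ℕ+}
    (h : len (wprod (l₁ ++ l₂)) = l₁.length + l₂.length) :
    len (wprod l₁) = l₁.length := by
  have hub : len (wprod l₁) ≤ l₁.length := len_le_of_word rfl
  have h2 : wprod (l₁ ++ l₂) = wprod l₁ * wprod l₂ := wprod_append _ _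
  have hlb : len (wprod (l₁ ++ l₂)) ≤ len (wprod l₁) + l₂.length := by
    rw [h2]; exact len_mul_wprod_le _ ⟨_, rfl⟩ _
  omega

end SchubAux

namespace SchubAux

/-! ### The chain of prefixes -/

def Qw (M r j : ℕ) : List ℕ+ := Bw M (r-1) ++ gw j M

lemma Bw_succ (M r : ℕ) : Bw M (r+1) = Bw M r ++ gw (r+1) M := rfl

lemma gw_prefix_aux (M : ℕ) : ∀ d r j, j - r = d → r ≤ j → j ≤ M+1 →
    ∃ t, gw r M = gw j M ++ t := by
  intro d
  induction d with
  | zero =>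
    intro r j hd hrj _
    have : r = j := by omega
    exact ⟨[], by rw [this, List.append_nil]⟩
  | succ d ih =>
    intro r j hd hrj hjM
    obtain ⟨t, ht⟩ := ih (r+1) j (by omega) (by omega) hjM
    refine ⟨t ++ [pn r], ?_⟩
    rw [gw_concat (by omega), ht, List.append_assoc]

lemma Bw_prefix_aux (M : ℕ) : ∀ s r, r ≤ s → ∃ t, Bw M s = Bw M r ++ t := by
  intro s
  induction s with
  | zero =>
    intro r hr
    have : r = 0 := by omega
    exact ⟨[], by rw [this, List.append_nil]⟩
  | succ s ih =>
    intro r hr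
    rcases Nat.lt_or_ge r (s+1) with h | h
    · obtain ⟨t, ht⟩ := ih r (by omega)
      exact ⟨t ++ gw (s+1) M, by rw [Bw_succ, ht, List.append_assoc]⟩
    · have : r = s+1 := by omega
      exact ⟨[], by rw [this, List.append_nil]⟩

lemma Qw_decomp {M r j : ℕ} (h1 : 1 ≤ r) (hrj : r ≤ j) (hjM : j ≤ M+1) (hrM : r ≤ M) :
    ∃ t, Bw M M = Qw M r j ++ t := by
  obtain ⟨t1, ht1⟩ := Bw_prefix_aux M M r hrM
  obtain ⟨t2, ht2⟩ := gw_prefix_aux M (j - r) r j rfl hrj hjM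
  have hBr : Bw M r = Bw M (r-1) ++ gw r M := by
    have : r = (r-1) + 1 := by omega
    rw [this]
    rfl
  refine ⟨t2 ++ t1, ?_⟩
  rw [ht1, hBr, ht2]
  unfold Qw
  simp [List.append_assoc]

lemma Qw_length (M r j : ℕ) (hj : j ≤ M + 1) :
    (Qw M r j).length = (Bw M (r-1)).length + (M + 1 - j) := by
  unfold Qw
  rw [List.length_append, gw_length]

lemma Qw_len {M r j : ℕ} (h1 : 1 ≤ r) (hrj : r ≤ j) (hjM : j ≤ M+1) (hrM : r ≤ M) :
    len (wprod (Qw M r j)) = (Qw M r j).length := by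
  obtain ⟨t, ht⟩ := Qw_decomp h1 hrj hjM hrM
  apply reduced_prefix (l₂ := t)
  rw [← ht]
  rw [len_full M, ht, List.length_append]

lemma Qw_step {M r j : ℕ} (h1 : 1 ≤ j) (h2 : j ≤ M) :
    wprod (Qw M r j) = wprod (Qw M r (j+1)) * st (pn j) := by
  unfold Qw
  rw [gw_concat (by omega : j ≤ M), ← List.append_assoc, wprod_append (Bw M (r-1) ++ gw (j+1) M) [pn j]]
  congr 1

lemma st_sq (k : ℕ+) : st k * st k = 1 := by
  show Equiv.swap k (k+1) * Equiv.swap k (k+1) = 1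
  exact Equiv.swap_mul_self _ _

lemma Qw_mul_st {M r j : ℕ} (h1 : 1 ≤ j) (h2 : j ≤ M) :
    wprod (Qw M r j) * st (pn j) = wprod (Qw M r (j+1)) := by
  rw [Qw_step h1 h2, mul_assoc, st_sq, mul_one]

/-- the divided-difference recursion along the chain. -/
lemma chain_axiom {R : Type*} [CommRing R] (SP : Equiv.Perm ℕ+ → MvPolynomial ℕ+ R)
    (hSP : IsSchubertFamily SP) {M r j : ℕ}
    (h1 : 1 ≤ r) (hrj : r ≤ j) (hjM : j ≤ M) :
    (X (pn j) - X (pn (j+1))) * SP (wprod (Qw M r (j+1)))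
      = SP (wprod (Qw M r j))
        - rename (Equiv.swap (pn j) (pn (j+1))) (SP (wprod (Qw M r j))) := by
  have h1j : 1 ≤ j := le_trans h1 hrj
  have hlen1 : len (wprod (Qw M r j)) = (Qw M r j).length :=
    Qw_len h1 hrj (by omega) (by omega)
  have hlen2 : len (wprod (Qw M r (j+1))) = (Qw M r (j+1)).length :=
    Qw_len h1 (by omega) (by omega) (by omega)
  have hmul := Qw_mul_st (M := M) (r := r) h1j hjM
  have hlenstep : len (wprod (Qw M r j) * simpleTransposition (pn j)) + 1
      = len (wprod (Qw M r j)) := by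
    show len (wprod (Qw M r j) * st (pn j)) + 1 = _
    rw [hmul, hlen1, hlen2, Qw_length M r j (by omega), Qw_length M r (j+1) (by omega)]
    omega
  have := hSP.2 (wprod (Qw M r j)) (fs_wprod _) (pn j) hlenstep
  rw [show wprod (Qw M r j) * simpleTransposition (pn j) = wprod (Qw M r (j+1)) from hmul] at this
  rw [pn_succ h1j]
  exact this

end SchubAux

namespace SchubAux

open MvPolynomial

/-! ### complete homogeneous polynomials in `x_a, …, x_m` -/

/-- `hs a k m = h_k(x_a, …, x_m)`, the complete homogeneous polynomial of degree `k`
in the variables `x_a, …, x_m` (zero if `m < a` and `k > 0`, one if `k = 0`). -/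
noncomputable def hs (a : ℕ) : ℕ → ℕ → MvPolynomial ℕ+ ℚ
  | 0, _ => 1
  | _+1, 0 => 0
  | k+1, m+1 =>
    if m+1 < a then 0 else hs a (k+1) m + X (pn (m+1)) * hs a k (m+1)
  termination_by k m => (k, m)

lemma hs_zero (a m : ℕ) : hs a 0 m = 1 := by simp [hs]

lemma hs_bot (a k : ℕ) : hs a (k+1) 0 = 0 := by simp [hs]

lemma hs_succ (a k m : ℕ) (h : a ≤ m+1) :
    hs a (k+1) (m+1) = hs a (k+1) m + X (pn (m+1)) * hs a k (m+1) := by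
  rw [hs]
  rw [if_neg (by omega)]

lemma hs_low (a k : ℕ) : ∀ m, m < a → hs a (k+1) m = 0 := by
  intro m
  induction m with
  | zero => intro _; exact hs_bot a k
  | succ m _ =>
    intro h
    rw [hs]
    rw [if_pos h]

lemma hs_rename (σ : ℕ+ → ℕ+) (a : ℕ) :
    ∀ k m, (∀ t : ℕ+, (t:ℕ) ≤ m → σ t = t) → rename σ (hs a k m) = hs a k m := by
  intro k
  induction k with
  | zero => intro m _; rw [hs_zero, map_one]
  | succ k ihk =>
    intro m
    induction m with
    | zero => intro _; rw [hs_bot, map_zero]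
    | succ m ihm =>
      intro hσ
      by_cases hc : m+1 < a
      · rw [hs_low _ _ _ hc, map_zero]
      · rw [hs_succ _ _ _ (by omega), map_add, map_mul, rename_X,
          ihm (fun t ht => hσ t (by omega)), ihk (m+1) hσ,
          hσ (pn (m+1)) (le_of_eq (pn_coe (by omega)))]

lemma swap_fix_low (m : ℕ) : ∀ t : ℕ+, (t:ℕ) ≤ m →
    Equiv.swap (pn (m+1)) (pn (m+2)) t = t := by
  intro t ht
  apply Equiv.swap_apply_of_ne_of_ne
  · intro he
    rw [he, pn_coe (by omega)] at ht
    omega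
  · intro he
    rw [he, pn_coe (by omega)] at ht
    omega

/-- the key divided-difference identity for complete homogeneous polynomials. -/
lemma hs_swap (a : ℕ) :
    ∀ k m, a ≤ m+1 →
    hs a (k+1) (m+1) - rename (Equiv.swap (pn (m+1)) (pn (m+2))) (hs a (k+1) (m+1))
      = (X (pn (m+1)) - X (pn (m+2))) * hs a k (m+2) := by
  intro k
  induction k with
  | zero =>
    intro m hm
    rw [hs_succ a 0 m hm]
    simp only [hs_zero, mul_one]
    rw [map_add, rename_X, Equiv.swap_apply_left, hs_rename _ a _ _ (swap_fix_low m)]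
    ring
  | succ k ih =>
    intro m hm
    have ihm := ih m hm
    have e2 : hs a (k+1) (m+2) = hs a (k+1) (m+1) + X (pn (m+2)) * hs a k (m+2) :=
      hs_succ a k (m+1) (by omega)
    rw [hs_succ a (k+1) m hm, map_add, map_mul, rename_X,
      hs_rename _ a _ _ (swap_fix_low m), Equiv.swap_apply_left, e2]
    linear_combination (X (pn (m+2)) : MvPolynomial ℕ+ ℚ) * ihm

lemma hs_self (a k : ℕ) (ha : 1 ≤ a) : hs a k a = X (pn a) ^ k := by
  obtain ⟨b, rfl⟩ : ∃ b, a = b + 1 := ⟨a - 1, by omega⟩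
  induction k with
  | zero => rw [hs_zero, pow_zero]
  | succ k ihk =>
    rw [hs_succ _ _ _ le_rfl, hs_low _ _ _ (by omega), ihk, pow_succ]
    ring

/-! ### the dominant monomial prefix -/

noncomputable def Dmon (M r : ℕ) : MvPolynomial ℕ+ ℚ := ∏ t ∈ Finset.range r, X (pn (t+1)) ^ (M - t)

lemma Dmon_rename (M r : ℕ) (σ : ℕ+ → ℕ+) (h : ∀ t : ℕ+, (t:ℕ) ≤ r → σ t = t) :
    rename σ (Dmon M r) = Dmon M r := by
  unfold Dmon
  rw [map_prod]
  apply Finset.prod_congr rfl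
  intro t ht
  simp only [Finset.mem_range] at ht
  rw [map_pow, rename_X, h (pn (t+1)) (le_of_eq (pn_coe (by omega)) |>.trans (by omega))]

lemma Dmon_succ (M r : ℕ) : Dmon M (r+1) = Dmon M r * X (pn (r+1)) ^ (M - r) :=
  Finset.prod_range_succ _ _

end SchubAux

namespace SchubAux

open MvPolynomial

lemma pn_ne_succ (j : ℕ) (hj : 1 ≤ j) : pn j ≠ pn (j+1) := by
  intro h
  have : ((pn j : ℕ+) : ℕ) = ((pn (j+1) : ℕ+) : ℕ) := by rw [h]
  rw [pn_coe hj, pn_coe (by omega)] at this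
  omega

lemma X_sub_ne (i k : ℕ+) (h : i ≠ k) : (X i - X k : MvPolynomial ℕ+ ℚ) ≠ 0 := by
  intro hc
  have hne : ¬ (Finsupp.single k 1 = Finsupp.single i (1:ℕ)) := by
    rw [Finsupp.single_eq_single_iff]
    rintro (⟨he, -⟩ | ⟨he, -⟩)
    · exact h he.symm
    · exact one_ne_zero he
  have h1 : coeff (Finsupp.single i 1) (X i - X k : MvPolynomial ℕ+ ℚ) = 1 := by
    rw [coeff_sub, coeff_X, coeff_X', if_neg hne, sub_zero, if_pos rfl]
  rw [hc, coeff_zero] at h1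
  exact one_ne_zero h1.symm

lemma swap_fix_lt (j : ℕ) (hj : 1 ≤ j) :
    ∀ t : ℕ+, (t:ℕ) < j → Equiv.swap (pn j) (pn (j+1)) t = t := by
  intro t ht
  apply Equiv.swap_apply_of_ne_of_ne
  · intro he; rw [he, pn_coe hj] at ht; omega
  · intro he; rw [he, pn_coe (by omega)] at ht; omega

lemma hs_swap' (a k j : ℕ) (hj : 1 ≤ j) (haj : a ≤ j) :
    hs a (k+1) j - rename (Equiv.swap (pn j) (pn (j+1))) (hs a (k+1) j)
      = (X (pn j) - X (pn (j+1))) * hs a k (j+1) := by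
  obtain ⟨m, rfl⟩ : ∃ m, j = m + 1 := ⟨j - 1, by omega⟩
  exact hs_swap a k m haj

lemma Bw_eq (M r : ℕ) (hr : 1 ≤ r) : Bw M r = Bw M (r-1) ++ gw r M := by
  obtain ⟨b, rfl⟩ : ∃ b, r = b + 1 := ⟨r - 1, by omega⟩
  rfl

/-- the inner (block) chain computation. -/
lemma SP_block (SP : Equiv.Perm ℕ+ → MvPolynomial ℕ+ ℚ) (hSP : IsSchubertFamily SP)
    (M r : ℕ) (hr : 1 ≤ r) (hrM : r ≤ M)
    (hbase : SP (wprod (Bw M r)) = Dmon M r) :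
    ∀ j, r ≤ j → j ≤ M + 1 → SP (wprod (Qw M r j)) = Dmon M (r-1) * hs r (M+1-j) j := by
  intro j hrj
  induction j, hrj using Nat.le_induction with
  | base =>
    intro _
    have hQ : Qw M r r = Bw M r := (Bw_eq M r hr).symm
    rw [hQ, hbase]
    have h1 : M + 1 - r = (M - (r-1) - 1) + 1 := by omega
    have h2 : hs r (M+1-r) r = X (pn r) ^ (M - (r-1)) := by
      rw [hs_self r (M+1-r) hr]
      congr 1
      omega
    rw [h2]
    have h3 : Dmon M ((r-1)+1) = Dmon M (r-1) * X (pn ((r-1)+1)) ^ (M - (r-1)) := Dmon_succ M (r-1)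
    rw [show (r-1)+1 = r from by omega] at h3
    exact h3
  | succ j hrj ih =>
    intro hj1
    have hjM : j ≤ M := by omega
    have ihj := ih (by omega)
    have hca := chain_axiom SP hSP (M := M) (r := r) hr hrj hjM
    rw [ihj] at hca
    have hren : rename (Equiv.swap (pn j) (pn (j+1)))
        (Dmon M (r-1) * hs r (M+1-j) j)
        = Dmon M (r-1) * rename (Equiv.swap (pn j) (pn (j+1))) (hs r (M+1-j) j) := by
      rw [map_mul]
      congr 1
      apply Dmon_rename
      intro t ht
      exact swap_fix_lt j (by omega) t (by omega)
    rw [hren] at hca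
    have hk : M + 1 - j = (M - j) + 1 := by omega
    have hsw := hs_swap' r (M - j) j (by omega) (by omega)
    rw [← hk] at hsw
    have hca2 : (X (pn j) - X (pn (j+1))) * SP (wprod (Qw M r (j+1)))
        = (X (pn j) - X (pn (j+1))) * (Dmon M (r-1) * hs r (M-j) (j+1)) := by
      rw [hca, ← mul_sub, hsw]
      ring
    have hne : (X (pn j) - X (pn (j+1)) : MvPolynomial ℕ+ ℚ) ≠ 0 :=
      X_sub_ne _ _ (pn_ne_succ j (by omega))
    have := mul_left_cancel₀ hne hca2
    rw [this, show M+1-(j+1) = M - j from by omega]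

/-- going from level `r+1` to level `r`. -/
lemma SP_Bw_step (SP : Equiv.Perm ℕ+ → MvPolynomial ℕ+ ℚ) (hSP : IsSchubertFamily SP)
    (M r : ℕ) (hr : 1 ≤ r) (hrM : r ≤ M)
    (hbase : SP (wprod (Bw M r)) = Dmon M r) :
    SP (wprod (Bw M (r-1))) = Dmon M (r-1) := by
  have := SP_block SP hSP M r hr hrM hbase (M+1) (by omega) le_rfl
  have hQ : Qw M r (M+1) = Bw M (r-1) := by
    unfold Qw
    rw [gw_nil (by omega), List.append_nil]
  rw [hQ] at this
  rw [this]
  have : M + 1 - (M+1) = 0 := by omega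
  rw [this, hs_zero, mul_one]

lemma SP_w0_base (SP : Equiv.Perm ℕ+ → MvPolynomial ℕ+ ℚ) (hSP : IsSchubertFamily SP)
    (M : ℕ) : SP (wprod (Bw M M)) = Dmon M M := by
  have hw0 : wprod (Bw M M) = w0 (M+1) := by rw [w0_eq_wprod_Bw, Bw_last]
  rw [hw0, hSP.1 (M+1)]
  unfold Dmon
  rw [Finset.prod_range_succ, show M+1-1-M = 0 from by omega, pow_zero, mul_one]
  apply Finset.prod_congr rfl
  intro t ht
  simp only [Finset.mem_range] at ht
  have h2 : (⟨t+1, Nat.succ_pos t⟩ : ℕ+) = pn (t+1) := by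
    apply PNat.coe_injective
    rw [pn_coe (by omega)]
    rfl
  rw [h2, show M+1-1-t = M - t from by omega]

lemma SP_Bw (SP : Equiv.Perm ℕ+ → MvPolynomial ℕ+ ℚ) (hSP : IsSchubertFamily SP)
    (M : ℕ) : ∀ d r, r + d = M → SP (wprod (Bw M r)) = Dmon M r := by
  intro d
  induction d with
  | zero =>
    intro r hr
    have : r = M := by omega
    subst this
    exact SP_w0_base SP hSP r
  | succ d ih =>
    intro r hr
    have h1 := ih (r+1) (by omega)
    have := SP_Bw_step SP hSP M (r+1) (by omega) (by omega) h1
    simpa using this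

/-- harvested: Schubert polynomials of the decreasing runs `s_M s_{M-1} ⋯ s_j`. -/
lemma SP_g (SP : Equiv.Perm ℕ+ → MvPolynomial ℕ+ ℚ) (hSP : IsSchubertFamily SP)
    (M j : ℕ) (hj : 1 ≤ j) (hjM : j ≤ M) :
    SP (wprod (gw j M)) = hs 1 (M+1-j) j := by
  have hbase := SP_Bw SP hSP M (M - 1) 1 (by omega)
  have := SP_block SP hSP M 1 le_rfl (by omega) hbase j hj (by omega)
  have hQ : Qw M 1 j = gw j M := by
    unfold Qw
    show Bw M 0 ++ gw j M = gw j M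
    rfl
  rw [hQ] at this
  rw [this]
  have hD : Dmon M 0 = 1 := rfl
  rw [hD, one_mul]

lemma SP_s (SP : Equiv.Perm ℕ+ → MvPolynomial ℕ+ ℚ) (hSP : IsSchubertFamily SP)
    (M : ℕ) (hM : 1 ≤ M) : SP (st (pn M)) = hs 1 1 M := by
  have hg : gw M M = [pn M] := by
    rw [gw_concat le_rfl, gw_nil (by omega)]
    rfl
  have := SP_g SP hSP M M hM le_rfl
  rw [hg] at this
  have hw : wprod [pn M] = st (pn M) := by simp [wprod]
  rw [hw] at this
  rw [this]
  congr 1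
  omega

lemma SP_v (SP : Equiv.Perm ℕ+ → MvPolynomial ℕ+ ℚ) (hSP : IsSchubertFamily SP)
    (M : ℕ) (hM : 2 ≤ M) : SP (st (pn M) * st (pn (M-1))) = hs 1 2 (M-1) := by
  have hMM : M - 1 + 1 = M := by omega
  have hg : gw (M-1) M = [pn M, pn (M-1)] := by
    rw [gw_concat (by omega : M - 1 ≤ M), hMM]
    rw [gw_concat (le_rfl : M ≤ M), gw_nil (by omega)]
    rfl
  have hsp := SP_g SP hSP M (M-1) (by omega) (by omega)
  rw [hg] at hsp
  have hw : wprod [pn M, pn (M-1)] = st (pn M) * st (pn (M-1)) := by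
    rw [wprod_cons, wprod_cons, wprod_nil, mul_one]
  rw [hw] at hsp
  rw [hsp, show M+1-(M-1) = 2 from by omega]

end SchubAux

namespace SchubAux

open MvPolynomial

/-! ### lengths of the harvested permutations, and descent analysis -/

lemma len_g (M j : ℕ) (hj : 1 ≤ j) (hjM : j ≤ M) : len (wprod (gw j M)) = M + 1 - j := by
  have hQ : Qw M 1 j = gw j M := by
    show Bw M 0 ++ gw j M = gw j M
    rfl
  have h := Qw_len (M := M) (r := 1) (j := j) le_rfl hj (by omega) (by omega)
  rw [hQ] at h
  rw [h, gw_length]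

lemma gw_single (a : ℕ) : gw a a = [pn a] := by
  rw [gw_concat le_rfl, gw_nil (by omega)]
  rfl

lemma wprod_single (a : ℕ+) : wprod [a] = st a := by simp [wprod]

lemma len_st (a : ℕ) (ha : 1 ≤ a) : len (st (pn a)) = 1 := by
  have := len_g a a ha le_rfl
  rw [gw_single, wprod_single] at this
  rw [this]
  omega

lemma gw_pair (M : ℕ) (hM : 2 ≤ M) : gw (M-1) M = [pn M, pn (M-1)] := by
  rw [gw_concat (by omega : M - 1 ≤ M), show M - 1 + 1 = M from by omega, gw_single]
  rfl

lemma len_v (M : ℕ) (hM : 2 ≤ M) : len (st (pn M) * st (pn (M-1))) = 2 := by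
  have := len_g M (M-1) (by omega) (by omega)
  rw [gw_pair M hM, wprod_cons, wprod_single] at this
  rw [this]
  omega

lemma st_inv (k : ℕ+) : (st k)⁻¹ = st k := Equiv.swap_inv _ _

lemma st_index_inj {j k : ℕ+} (h : st j = st k) : j = k := by
  have h1 : st j j = st k j := by rw [h]
  have h2 := stn j j
  have h3 := stn k j
  rw [h1] at h2
  rw [h3] at h2
  apply PNat.coe_injective
  split_ifs at h2 <;> omega

lemma st_self_apply (k : ℕ+) : st k k = k + 1 := by
  rw [st_apply, if_pos rfl]

lemma st_succ_apply (k : ℕ+) : st k (k+1) = k := by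
  rw [st_apply]
  have hne : k + 1 ≠ k := by
    intro h
    have : ((k+1 : ℕ+) : ℕ) = (k:ℕ) := by rw [h]
    rw [PNat.add_coe, PNat.one_coe] at this
    omega
  rw [if_neg hne, if_pos rfl]

/-- D applied to the Schubert polynomial of a simple transposition. -/
lemma D_s (SP : Equiv.Perm ℕ+ → MvPolynomial ℕ+ ℚ) (hSP : IsSchubertFamily SP)
    (c : ℕ+ → ℚ) (D : MvPolynomial ℕ+ ℚ →ₗ[ℚ] MvPolynomial ℕ+ ℚ)
    (hD : ∀ π : Equiv.Perm ℕ+, FinitelySupported π →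
      D (SP π) = ∑ᶠ i : ℕ+,
        if len (simpleTransposition i * π) < len π
        then c i • SP (simpleTransposition i * π) else 0)
    (a : ℕ) (ha : 1 ≤ a) : D (hs 1 1 a) = C (c (pn a)) := by
  have hfs : FinitelySupported (st (pn a)) := fs_st _
  have hsp := SP_s SP hSP a ha
  have hone : SP 1 = 1 := by
    have hw : w0 0 = 1 := by
      apply Equiv.ext
      intro x
      show w0fun 0 x = x
      unfold w0fun
      exact dif_neg (by exact Nat.not_le.mpr x.2)
    have := hSP.1 0
    rw [hw] at this
    simpa using this
  have hlen1 : len (st (pn a)) = 1 := len_st a ha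
  have key := hD (st (pn a)) hfs
  rw [finsum_eq_single _ (pn a) ?neg] at key
  case neg =>
    intro x hx
    rw [if_neg]
    intro hlt
    rw [hlen1] at hlt
    have h0 : len (simpleTransposition x * st (pn a)) = 0 := by omega
    have hword : HasWord (simpleTransposition x * st (pn a)) :=
      ⟨[x, pn a], by rw [wprod_cons, wprod_single]⟩
    have h1 := eq_one_of_len_eq_zero hword h0
    have : (simpleTransposition x : Equiv.Perm ℕ+) = st (pn a) := by
      have h2 := mul_eq_one_iff_eq_inv.mp h1
      rw [st_inv] at h2
      exact h2
    exact hx (st_index_inj this)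
  · rw [show simpleTransposition (pn a) * st (pn a) = 1 from st_sq (pn a)] at key
    rw [len_one, hlen1, if_pos (by omega), hone] at key
    rw [hsp] at key
    rw [key]
    rw [smul_eq_C_mul, mul_one]

/-- D applied to the Schubert polynomial of `s_M s_{M-1}`. -/
lemma D_v (SP : Equiv.Perm ℕ+ → MvPolynomial ℕ+ ℚ) (hSP : IsSchubertFamily SP)
    (c : ℕ+ → ℚ) (D : MvPolynomial ℕ+ ℚ →ₗ[ℚ] MvPolynomial ℕ+ ℚ)
    (hD : ∀ π : Equiv.Perm ℕ+, FinitelySupported π →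
      D (SP π) = ∑ᶠ i : ℕ+,
        if len (simpleTransposition i * π) < len π
        then c i • SP (simpleTransposition i * π) else 0)
    (M : ℕ) (hM : 2 ≤ M) : D (hs 1 2 (M-1)) = C (c (pn M)) * hs 1 1 (M-1) := by
  set v : Equiv.Perm ℕ+ := st (pn M) * st (pn (M-1)) with hv
  have hfs : FinitelySupported v := fs_mul (fs_st _) (fs_st _)
  have hlenv : len v = 2 := len_v M hM
  have hcancel : simpleTransposition (pn M) * v = st (pn (M-1)) := by
    rw [hv, ← mul_assoc, show (simpleTransposition (pn M) : Equiv.Perm ℕ+) * st (pn M) = 1 from st_sq _, one_mul]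
  have hpnM : pn M = pn (M-1) + 1 := by
    have := pn_succ (n := M-1) (by omega)
    rw [show M - 1 + 1 = M from by omega] at this
    exact this
  have hpnM1 : pn (M+1) = pn M + 1 := pn_succ (by omega)
  have key := hD v hfs
  rw [finsum_eq_single _ (pn M) ?neg] at key
  case neg =>
    intro x hx
    rw [if_neg]
    intro hlt
    rw [hlenv] at hlt
    have hword : HasWord (simpleTransposition x * v) :=
      ⟨[x, pn M, pn (M-1)], by rw [wprod_cons, wprod_cons, wprod_single, hv]⟩
    -- the image of pn (M-1) under st x * v is st x (pn (M+1))
    have hvapp : v (pn (M-1)) = pn (M+1) := by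
      rw [hv]
      show st (pn M) (st (pn (M-1)) (pn (M-1))) = pn (M+1)
      rw [st_self_apply, ← hpnM, st_self_apply, ← hpnM1]
    have himg : (simpleTransposition x * v) (pn (M-1)) = st x (pn (M+1)) := by
      show st x (v (pn (M-1))) = _
      rw [hvapp]
    have hxM : (x : ℕ) ≠ M := fun hc => hx (PNat.coe_injective (by rw [pn_coe (by omega)]; exact hc))
    have himg_big : (M:ℕ) + 1 ≤ ((simpleTransposition x * v) (pn (M-1)) : ℕ) := by
      rw [himg, stn]
      rw [pn_coe (by omega)]
      split_ifs <;> omega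
    interval_cases hl : len (simpleTransposition x * v)
    · -- len = 0 : would be identity
      have h1 := eq_one_of_len_eq_zero hword hl
      rw [h1] at himg_big
      simp only [Equiv.Perm.one_apply] at himg_big
      rw [pn_coe (by omega)] at himg_big
      omega
    · -- len = 1 : would be a simple transposition, but moves a point by ≥ 2
      obtain ⟨k, hk⟩ := eq_st_of_len_eq_one hword hl
      rw [hk] at himg_big
      have := st_move_le k (pn (M-1))
      rw [pn_coe (by omega)] at this
      omega
  · rw [hcancel, len_st (M-1) (by omega), hlenv, if_pos (by omega)] at key
    rw [SP_v SP hSP M hM, SP_s SP hSP (M-1) (by omega)] at key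
    rw [key, smul_eq_C_mul]

end SchubAux

namespace SchubAux

open MvPolynomial

lemma pn_ne_one {m : ℕ} (h : 2 ≤ m) : pn m ≠ 1 := by
  intro he
  have : ((pn m : ℕ+) : ℕ) = ((1 : ℕ+) : ℕ) := by rw [he]
  rw [pn_coe (by omega), PNat.one_coe] at this
  omega

lemma coeff_x1_X (k : ℕ+) (h : k ≠ 1) :
    coeff (Finsupp.single 1 1) (X k : MvPolynomial ℕ+ ℚ) = 0 := by
  rw [coeff_X', if_neg]
  rw [Finsupp.single_eq_single_iff]
  rintro (⟨he, -⟩ | ⟨he, -⟩)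
  · exact h he
  · exact one_ne_zero he

lemma hs110 : hs 1 1 0 = 0 := hs_bot 1 0

lemma hs11_succ (m : ℕ) : hs 1 1 (m+1) = hs 1 1 m + X (pn (m+1)) := by
  rw [hs_succ 1 0 m (by omega), hs_zero, mul_one]

lemma hs111 : hs 1 1 1 = X (pn 1) := by
  rw [hs11_succ 0, hs110, zero_add]

lemma coeff_x1_hs11 : ∀ m, 1 ≤ m → coeff (Finsupp.single 1 1) (hs 1 1 m) = 1 := by
  intro m
  induction m with
  | zero => omega
  | succ m ih =>
    intro _
    rcases Nat.eq_zero_or_pos m with h0 | h1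
    · subst h0
      rw [hs111, pn_one]
      rw [coeff_X, if_pos rfl]
    · rw [hs11_succ m, coeff_add, ih h1, coeff_x1_X (pn (m+1)) (pn_ne_one (by omega)), add_zero]

section Main

variable (SP : Equiv.Perm ℕ+ → MvPolynomial ℕ+ ℚ) (hSP : IsSchubertFamily SP)
    (c : ℕ+ → ℚ) (D : MvPolynomial ℕ+ ℚ →ₗ[ℚ] MvPolynomial ℕ+ ℚ)
    (hD : ∀ π : Equiv.Perm ℕ+, FinitelySupported π →
      D (SP π) = ∑ᶠ i : ℕ+,
        if len (simpleTransposition i * π) < len π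
        then c i • SP (simpleTransposition i * π) else 0)
    (hLeibniz : ∀ f g : MvPolynomial ℕ+ ℚ, D (f * g) = D f * g + f * D g)

include hSP hD hLeibniz in
lemma coeff_D_hs2 : ∀ i, 1 ≤ i →
    coeff (Finsupp.single 1 1) (D (hs 1 2 i)) = c (pn i) + c (pn 1) := by
  intro i hi
  induction i, hi using Nat.le_induction with
  | base =>
    have h2 : hs 1 2 1 = X (pn 1) * X (pn 1) := by
      rw [hs_self 1 2 le_rfl, pow_two]
    have hDX : D (X (pn 1)) = C (c (pn 1)) := by
      rw [← hs111]
      exact D_s SP hSP c D hD 1 le_rfl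
    rw [h2, hLeibniz, hDX]
    rw [coeff_add, coeff_C_mul, mul_comm (X (pn 1)) (C (c (pn 1))), coeff_C_mul, pn_one,
      coeff_X, if_pos rfl]
    ring
  | succ i hi ih =>
    have he : hs 1 2 (i+1) = hs 1 2 i + X (pn (i+1)) * hs 1 1 (i+1) :=
      hs_succ 1 1 i (by omega)
    have hDX : D (X (pn (i+1))) = C (c (pn (i+1))) - C (c (pn i)) := by
      have hX : X (pn (i+1)) = hs 1 1 (i+1) - hs 1 1 i := by
        rw [hs11_succ i]; ring
      rw [hX, map_sub, D_s SP hSP c D hD (i+1) (by omega), D_s SP hSP c D hD i hi]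
    have hDh : D (hs 1 1 (i+1)) = C (c (pn (i+1))) := D_s SP hSP c D hD (i+1) (by omega)
    rw [he, map_add, hLeibniz, hDX, hDh]
    rw [coeff_add, coeff_add, ih]
    rw [sub_mul, coeff_sub, coeff_C_mul, coeff_C_mul, coeff_x1_hs11 (i+1) (by omega)]
    rw [mul_comm (X (pn (i+1))) (C (c (pn (i+1)))), coeff_C_mul,
      coeff_x1_X (pn (i+1)) (pn_ne_one (by omega))]
    ring

include hSP hD hLeibniz in
lemma c_rec : ∀ i, 1 ≤ i → c (pn (i+1)) = c (pn i) + c (pn 1) := by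
  intro i hi
  have hDv := D_v SP hSP c D hD (i+1) (by omega)
  rw [Nat.add_sub_cancel] at hDv
  have h1 := coeff_D_hs2 SP hSP c D hD hLeibniz i hi
  rw [hDv, coeff_C_mul, coeff_x1_hs11 i hi, mul_one] at h1
  exact h1

include hSP hD hLeibniz in
lemma c_linear : ∀ a, 1 ≤ a → c (pn a) = (a : ℚ) * c (pn 1) := by
  intro a ha
  induction a, ha using Nat.le_induction with
  | base => rw [Nat.cast_one, one_mul]
  | succ a ha ih =>
    rw [c_rec SP hSP c D hD hLeibniz a ha, ih]
    push_cast
    ring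

end Main

end SchubAux


/-- Let `D = Σ_i cᵢ Mᵢ` where `Mᵢ` is the operator on `ℚ[x₁, x₂, …]` with
`Mᵢ S_π = S_{rᵢ π}` if `ℓ(rᵢ π) < ℓ(π)` and `Mᵢ S_π = 0` otherwise (defined via the
Schubert basis).  If `D` is a derivation of `ℚ[x₁, x₂, …]` then `cᵢ = i · c₁` for all
`i ≥ 1`, i.e. `D` is a scalar multiple of `∇ = Σ_i ∂/∂xᵢ`. -/
theorem derivation_of_martials_is_multiple_of_nabla
    (SP : Equiv.Perm ℕ+ → MvPolynomial ℕ+ ℚ) (hSP : IsSchubertFamily SP)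
    (c : ℕ+ → ℚ) (D : MvPolynomial ℕ+ ℚ →ₗ[ℚ] MvPolynomial ℕ+ ℚ)
    (hD : ∀ π : Equiv.Perm ℕ+, FinitelySupported π →
      D (SP π) = ∑ᶠ i : ℕ+,
        if len (simpleTransposition i * π) < len π
        then c i • SP (simpleTransposition i * π) else 0)
    (hLeibniz : ∀ f g : MvPolynomial ℕ+ ℚ, D (f * g) = D f * g + f * D g) :
    ∀ i : ℕ+, c i = ((i : ℕ) : ℚ) * c 1 := by
  intro i
  have h := SchubAux.c_linear SP hSP c D hD hLeibniz (i : ℕ) i.2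
  have hpi : SchubAux.pn (i : ℕ) = i := PNat.coe_injective (SchubAux.pn_coe i.2)
  rw [hpi, SchubAux.pn_one] at h
  exact h
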